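/- For every integer n ≥ 0, the number of elements of Q̄_4(0,n) equals the number of elements of P_7(0,n). -/

import Mathlib

noncomputable section

/-- The i-th largest part (1-indexed) of a partition, represented as a
multiset of parts; `0` if `i` exceeds the number of parts. -/
def partAt (mu : Multiset ℕ) (i : ℕ) : ℕ :=
  (mu.sort (· ≥ ·)).getD (i - 1) 0

/-- The smallest part of a partition, with the convention that the smallest
part of the empty partition is `+∞`. -/
def sMin (mu : Multiset ℕ) : ℕ∞ := (mu.map ((↑) : ℕ → ℕ∞)).inf

/-- Q̄₄(0,n): triples (j, α, β) with j ≥ 1, parts of α and β at most j,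
|α|+|β|+j² = n, β₁ = β₂ = j, ℓ(β) ≥ ℓ(α)+1, α₁ = α₂ = j, s(α) ≥ 2 and
s(β) = 2. -/
def Qbar4 (n : ℕ) : Set (ℕ × Multiset ℕ × Multiset ℕ) :=
  {x | 1 ≤ x.1 ∧ (∀ a ∈ x.2.1, 0 < a) ∧ (∀ a ∈ x.2.2, 0 < a) ∧
       (∀ a ∈ x.2.1, a ≤ x.1) ∧ (∀ a ∈ x.2.2, a ≤ x.1) ∧
       x.2.1.sum + x.2.2.sum + x.1 * x.1 = n ∧
       partAt x.2.2 1 = x.1 ∧ partAt x.2.2 2 = x.1 ∧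
       Multiset.card x.2.1 + 1 ≤ Multiset.card x.2.2 ∧
       partAt x.2.1 1 = x.1 ∧ partAt x.2.1 2 = x.1 ∧
       2 ≤ sMin x.2.1 ∧ sMin x.2.2 = 2}

/-- P₇(0,n): triples (j', γ, δ) with j' ≥ 1, parts of γ and δ at most j',
|γ|+|δ|+j'² = n, ℓ(γ) = ℓ(δ), γ₁ = j'-1 > γ₂, δ₁ = j' and δ has no part
equal to 2. -/
def P7 (n : ℕ) : Set (ℕ × Multiset ℕ × Multiset ℕ) :=
  {x | 1 ≤ x.1 ∧ (∀ a ∈ x.2.1, 0 < a) ∧ (∀ a ∈ x.2.2, 0 < a) ∧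
       (∀ a ∈ x.2.1, a ≤ x.1) ∧ (∀ a ∈ x.2.2, a ≤ x.1) ∧
       x.2.1.sum + x.2.2.sum + x.1 * x.1 = n ∧
       Multiset.card x.2.1 = Multiset.card x.2.2 ∧
       (partAt x.2.1 1 : ℤ) = (x.1 : ℤ) - 1 ∧
       (partAt x.2.1 2 : ℤ) < (x.1 : ℤ) - 1 ∧
       partAt x.2.2 1 = x.1 ∧ 2 ∉ x.2.2}

lemma listAux : ∀ (l : List ℕ), l.Pairwise (· ≥ ·) → ∀ i j : ℕ, 1 ≤ j →
    (j ≤ l.getD i 0 ↔ i + 1 ≤ l.countP (fun a => decide (j ≤ a))) := by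
  intro l
  induction l with
  | nil => intro _ i j hj; simp; omega
  | cons a t ih =>
    intro hs i j hj
    have h1 : ∀ x ∈ t, x ≤ a := fun x hx => List.rel_of_pairwise_cons hs hx
    have h2 : t.Pairwise (· ≥ ·) := hs.of_cons
    have hcnt : ¬ j ≤ a → t.countP (fun a => decide (j ≤ a)) = 0 := by
      intro hja
      rw [List.countP_eq_zero]
      intro x hx
      simp only [decide_eq_true_eq]
      have := h1 x hx; omega
    cases i with
    | zero =>
      simp only [List.getD_cons_zero, List.countP_cons]
      by_cases hja : j ≤ a
      · simp [hja]
      · simp [hja, hcnt hja]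
    | succ i =>
      simp only [List.getD_cons_succ, List.countP_cons]
      rw [ih h2 i j hj]
      by_cases hja : j ≤ a
      · simp [hja]
      · simp [hja, hcnt hja]

lemma le_partAt_iff (μ : Multiset ℕ) (i j : ℕ) (hj : 1 ≤ j) :
    j ≤ partAt μ (i + 1) ↔ i + 1 ≤ Multiset.card (μ.filter (fun a => j ≤ a)) := by
  have h := listAux (μ.sort (· ≥ ·)) (Multiset.pairwise_sort μ _) i j hj
  rw [partAt]
  simp only [Nat.add_sub_cancel]
  rw [h, ← Multiset.countP_eq_card_filter]
  conv_rhs => rw [← Multiset.sort_eq μ (· ≥ ·)]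
  rw [Multiset.coe_countP]

lemma partAt_le (μ : Multiset ℕ) (j : ℕ) (h : ∀ a ∈ μ, a ≤ j) (i : ℕ) : partAt μ i ≤ j := by
  rw [partAt]
  rcases lt_or_ge (i-1) (μ.sort (· ≥ ·)).length with hl | hl
  · rw [List.getD_eq_getElem _ _ hl]
    exact h _ ((Multiset.mem_sort _).mp (List.getElem_mem hl))
  · rw [List.getD_eq_default _ _ hl]; omega

lemma card_filter_ge_eq_count (μ : Multiset ℕ) (j : ℕ) (hle : ∀ a ∈ μ, a ≤ j) :
    Multiset.card (μ.filter (fun a => j ≤ a)) = μ.count j := by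
  rw [Multiset.count, Multiset.countP_eq_card_filter]
  congr 1
  apply Multiset.filter_congr
  intro a ha
  have := hle a ha
  constructor <;> (intro h; omega)

lemma partAt_eq_of_count (μ : Multiset ℕ) (j i : ℕ) (hj : 1 ≤ j) (hle : ∀ a ∈ μ, a ≤ j)
    (hc : i + 1 ≤ μ.count j) : partAt μ (i + 1) = j := by
  refine le_antisymm (partAt_le μ j hle _) ((le_partAt_iff μ i j hj).mpr ?_)
  rw [card_filter_ge_eq_count μ j hle]; exact hc

lemma count_of_partAt (μ : Multiset ℕ) (j i : ℕ) (hj : 1 ≤ j) (hle : ∀ a ∈ μ, a ≤ j)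
    (h : j ≤ partAt μ (i + 1)) : i + 1 ≤ μ.count j := by
  rw [← card_filter_ge_eq_count μ j hle]
  exact (le_partAt_iff μ i j hj).mp h

lemma le_partAt_one (μ : Multiset ℕ) (a : ℕ) (ha : a ∈ μ) : a ≤ partAt μ 1 := by
  rcases Nat.eq_zero_or_pos a with rfl | hpos
  · exact Nat.zero_le _
  · refine (le_partAt_iff μ 0 a hpos).mpr ?_
    have h1 : a ∈ μ.filter (fun x => a ≤ x) := Multiset.mem_filter.mpr ⟨ha, le_refl a⟩
    have h2 := Multiset.card_pos_iff_exists_mem.mpr ⟨a, h1⟩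
    omega

lemma sMin_ge_iff (μ : Multiset ℕ) (k : ℕ) : (k : ℕ∞) ≤ sMin μ ↔ ∀ a ∈ μ, k ≤ a := by
  rw [sMin, Multiset.le_inf]
  constructor
  · intro h a ha
    have := h a (Multiset.mem_map_of_mem _ ha)
    exact_mod_cast this
  · intro h b hb
    obtain ⟨a, ha, rfl⟩ := Multiset.mem_map.mp hb
    exact_mod_cast h a ha

lemma sMin_eq_iff (μ : Multiset ℕ) (k : ℕ) :
    sMin μ = (k : ℕ∞) ↔ k ∈ μ ∧ ∀ a ∈ μ, k ≤ a := by
  constructor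
  · intro h
    have hge : ∀ a ∈ μ, k ≤ a := (sMin_ge_iff μ k).mp h.ge
    refine ⟨?_, hge⟩
    by_contra hk2
    have h1 : ((k+1 : ℕ) : ℕ∞) ≤ sMin μ := by
      rw [sMin_ge_iff]
      intro a ha
      have := hge a ha
      rcases Nat.lt_or_ge a (k+1) with h' | h'
      · exact absurd (by omega : a = k) (fun e => hk2 (e ▸ ha))
      · exact h'
    rw [h] at h1
    have : (k:ℕ) + 1 ≤ k := by exact_mod_cast h1
    omega
  · rintro ⟨hmem, hge⟩
    refine le_antisymm ?_ ((sMin_ge_iff μ k).mpr hge)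
    exact Multiset.inf_le (Multiset.mem_map_of_mem _ hmem)

lemma sum_map_pred (M : Multiset ℕ) (h : ∀ a ∈ M, 1 ≤ a) :
    (M.map (fun a => a - 1)).sum + Multiset.card M = M.sum := by
  induction M using Multiset.induction with
  | empty => simp
  | cons a s ih =>
    simp only [Multiset.map_cons, Multiset.sum_cons, Multiset.card_cons]
    have ha := h a (Multiset.mem_cons_self a s)
    have := ih (fun x hx => h x (Multiset.mem_cons_of_mem hx))
    omega

lemma sum_map_succ (M : Multiset ℕ) :
    (M.map (fun a => a + 1)).sum = M.sum + Multiset.card M := by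
  induction M using Multiset.induction with
  | empty => simp
  | cons a s ih => simp [ih]; omega

lemma jj2_le (j : ℕ) (β : Multiset ℕ) (hj : 2 ≤ j) (hcnt : 2 ≤ β.count j) (h2 : 2 ∈ β)
    (hcard : 3 ≤ Multiset.card β) (hparts : ∀ a ∈ β, 2 ≤ a ∧ a ≤ j) :
    (j ::ₘ j ::ₘ {2}) ≤ β := by
  rcases eq_or_lt_of_le hj with hj2 | hj3
  · subst hj2
    have hall : ∀ b ∈ β, b = 2 := fun b hb => by have := hparts b hb; omega
    have hβ : β = Multiset.replicate (Multiset.card β) 2 := Multiset.eq_replicate_card.mpr hall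
    rw [hβ]
    have h32 : ((2:ℕ) ::ₘ 2 ::ₘ {2}) = Multiset.replicate 3 2 := rfl
    rw [h32]
    exact (Multiset.replicate_le_replicate 2).mpr hcard
  · rw [Multiset.le_iff_count]
    intro a
    by_cases haj : a = j
    · subst haj
      simp [Multiset.count_cons, Multiset.count_singleton, show ¬(a = 2) by omega]
      omega
    · by_cases ha2 : a = 2
      · subst ha2
        have := Multiset.one_le_count_iff_mem.mpr h2
        simp [Multiset.count_cons, Multiset.count_singleton, show ¬(2 = j) by omega]
        omega
      · simp [Multiset.count_cons, Multiset.count_singleton, haj, ha2]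

def Fmap (x : ℕ × Multiset ℕ × Multiset ℕ) : ℕ × Multiset ℕ × Multiset ℕ :=
  (x.1 + 1,
   x.1 ::ₘ (x.2.2 - (x.1 ::ₘ x.1 ::ₘ {2})).map (fun a => a - 1),
   (x.1 + 1) ::ₘ ((x.2.1 - Multiset.replicate 2 x.1).map (fun a => a + 1)
     + Multiset.replicate
        (Multiset.card (x.2.2 - (x.1 ::ₘ x.1 ::ₘ {2}))
          - Multiset.card (x.2.1 - Multiset.replicate 2 x.1)) 1))

def Gmap (x : ℕ × Multiset ℕ × Multiset ℕ) : ℕ × Multiset ℕ × Multiset ℕ :=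
  (x.1 - 1,
   (x.1 - 1) ::ₘ (x.1 - 1) ::ₘ ((x.2.2.erase x.1).filter (fun a => 3 ≤ a)).map (fun a => a - 1),
   (x.1 - 1) ::ₘ (x.1 - 1) ::ₘ 2 ::ₘ (x.2.1.erase (x.1 - 1)).map (fun a => a + 1))

lemma Fmem (n j : ℕ) (α β : Multiset ℕ) (hx : (j, α, β) ∈ Qbar4 n) :
    Fmap (j, α, β) ∈ P7 n := by
  obtain ⟨hj, hαpos, hβpos, hαle, hβle, hsum, hβ1, hβ2, hcard, hα1, hα2, hαmin, hβmin⟩ := hx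
  simp only at hj hαpos hβpos hαle hβle hsum hβ1 hβ2 hcard hα1 hα2 hαmin hβmin
  have hβmin' := (sMin_eq_iff β 2).mp (by exact_mod_cast hβmin)
  have h2β : 2 ∈ β := hβmin'.1
  have hβ2parts : ∀ a ∈ β, 2 ≤ a := hβmin'.2
  have hα2parts : ∀ a ∈ α, 2 ≤ a := (sMin_ge_iff α 2).mp (by exact_mod_cast hαmin)
  have hj2 : 2 ≤ j := le_trans (hβ2parts 2 h2β) (hβle 2 h2β)
  have hcntα : 2 ≤ α.count j := count_of_partAt α j 1 hj hαle (by rw [hα2])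
  have hcntβ : 2 ≤ β.count j := count_of_partAt β j 1 hj hβle (by rw [hβ2])
  have hcardα : 2 ≤ Multiset.card α := le_trans hcntα (Multiset.count_le_card j α)
  have hcardβ : 3 ≤ Multiset.card β := by omega
  have hBle : (j ::ₘ j ::ₘ {2}) ≤ β :=
    jj2_le j β hj2 hcntβ h2β hcardβ (fun a ha => ⟨hβ2parts a ha, hβle a ha⟩)
  have hAle : Multiset.replicate 2 j ≤ α := Multiset.le_count_iff_replicate_le.mp hcntα
  simp only [Fmap, P7, Set.mem_setOf_eq]
  set A := α - Multiset.replicate 2 j with hA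
  set B := β - (j ::ₘ j ::ₘ {2}) with hB
  have hαdec : Multiset.replicate 2 j + A = α := by
    rw [hA, add_comm]; exact tsub_add_cancel_of_le hAle
  have hβdec : (j ::ₘ j ::ₘ {2}) + B = β := by
    rw [hB, add_comm]; exact tsub_add_cancel_of_le hBle
  have hAparts : ∀ a ∈ A, 2 ≤ a ∧ a ≤ j := by
    intro a ha
    have : a ∈ α := Multiset.mem_of_le (Multiset.sub_le_self _ _) ha
    exact ⟨hα2parts a this, hαle a this⟩
  have hBparts : ∀ a ∈ B, 2 ≤ a ∧ a ≤ j := by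
    intro a ha
    have : a ∈ β := Multiset.mem_of_le (Multiset.sub_le_self _ _) ha
    exact ⟨hβ2parts a this, hβle a this⟩
  have hcA : Multiset.card A + 2 = Multiset.card α := by
    rw [← hαdec]; simp only [Multiset.card_add, Multiset.card_replicate]; omega
  have hcB : Multiset.card B + 3 = Multiset.card β := by
    rw [← hβdec]
    simp only [Multiset.card_add, Multiset.card_cons, Multiset.card_singleton]; omega
  have hsA : A.sum + 2 * j = α.sum := by
    rw [← hαdec]; simp only [Multiset.sum_add, Multiset.sum_replicate, smul_eq_mul]; omega
  have hsB : B.sum + (2 * j + 2) = β.sum := by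
    rw [← hβdec]
    simp only [Multiset.sum_add, Multiset.sum_cons, Multiset.sum_singleton]; omega
  have hcAB : Multiset.card A ≤ Multiset.card B := by omega
  have hγle : ∀ a ∈ (j ::ₘ B.map (fun a => a - 1)), a ≤ j := by
    intro a ha
    rcases Multiset.mem_cons.mp ha with rfl | hm
    · exact le_refl _
    · obtain ⟨b, hb, rfl⟩ := Multiset.mem_map.mp hm
      have := hBparts b hb; omega
  have hδle : ∀ a ∈ ((j+1) ::ₘ (A.map (fun a => a + 1)
      + Multiset.replicate (Multiset.card B - Multiset.card A) 1)), a ≤ j + 1 := by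
    intro a ha
    rcases Multiset.mem_cons.mp ha with rfl | hm
    · exact le_refl _
    · rcases Multiset.mem_add.mp hm with hm' | hm'
      · obtain ⟨b, hb, rfl⟩ := Multiset.mem_map.mp hm'
        have := hAparts b hb; omega
      · have := Multiset.eq_of_mem_replicate hm'; omega
  have hγ1 : partAt (j ::ₘ B.map (fun a => a - 1)) 1 = j := by
    apply partAt_eq_of_count _ j 0 hj hγle
    simp [Multiset.count_cons_self]
  have hcntγ : (j ::ₘ B.map (fun a => a - 1)).count j = 1 := by
    rw [Multiset.count_cons_self]
    have : (B.map (fun a => a - 1)).count j = 0 := by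
      rw [Multiset.count_eq_zero]
      intro hm
      obtain ⟨b, hb, hbe⟩ := Multiset.mem_map.mp hm
      have := hBparts b hb; omega
    omega
  have hγ2 : partAt (j ::ₘ B.map (fun a => a - 1)) 2 < j := by
    by_contra hcon
    push_neg at hcon
    have := count_of_partAt _ j 1 hj hγle hcon
    omega
  have hδ1 : partAt ((j+1) ::ₘ (A.map (fun a => a + 1)
      + Multiset.replicate (Multiset.card B - Multiset.card A) 1)) 1 = j + 1 := by
    apply partAt_eq_of_count _ (j+1) 0 (by omega) hδle
    simp [Multiset.count_cons_self]
  refine ⟨by omega, ?_, ?_, ?_, ?_, ?_, ?_, ?_, ?_, ?_, ?_⟩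
  · intro a ha
    rcases Multiset.mem_cons.mp ha with rfl | hm
    · omega
    · obtain ⟨b, hb, rfl⟩ := Multiset.mem_map.mp hm
      have := hBparts b hb; omega
  · intro a ha
    rcases Multiset.mem_cons.mp ha with rfl | hm
    · omega
    · rcases Multiset.mem_add.mp hm with hm' | hm'
      · obtain ⟨b, hb, rfl⟩ := Multiset.mem_map.mp hm'
        omega
      · have := Multiset.eq_of_mem_replicate hm'; omega
  · intro a ha
    exact le_trans (hγle a ha) (by omega)
  · exact hδle
  · -- sum condition
    have e1 := sum_map_pred B (fun a ha => by have := hBparts a ha; omega)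
    have e2 := sum_map_succ A
    have e3 : ((j:ℕ)+1)*((j:ℕ)+1) = j*j + 2*j + 1 := by ring
    simp only [Multiset.sum_cons, Multiset.sum_add, Multiset.sum_replicate, smul_eq_mul,
      mul_one]
    omega
  · simp only [Multiset.card_cons, Multiset.card_add, Multiset.card_map,
      Multiset.card_replicate]
    omega
  · rw [hγ1]; push_cast; ring
  · have : (partAt (j ::ₘ B.map (fun a => a - 1)) 2 : ℤ) < (j : ℤ) := by exact_mod_cast hγ2
    push_cast
    omega
  · exact hδ1
  · intro hmem
    rcases Multiset.mem_cons.mp hmem with he | hm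
    · omega
    · rcases Multiset.mem_add.mp hm with hm' | hm'
      · obtain ⟨b, hb, hbe⟩ := Multiset.mem_map.mp hm'
        have := hAparts b hb; omega
      · have := Multiset.eq_of_mem_replicate hm'; omega
lemma Gmem (n j' : ℕ) (γ δ : Multiset ℕ) (hx : (j', γ, δ) ∈ P7 n) :
    Gmap (j', γ, δ) ∈ Qbar4 n := by
  obtain ⟨hj', hγpos, hδpos, hγle, hδle, hsum, hcard, hγ1, hγ2, hδ1, h2δ⟩ := hx
  simp only at hj' hγpos hδpos hγle hδle hsum hcard hγ1 hγ2 hδ1 h2δ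
  have hδmem : j' ∈ δ := by
    have h := count_of_partAt δ j' 0 hj' hδle (by rw [hδ1])
    exact Multiset.one_le_count_iff_mem.mp (by omega)
  have hj'2 : j' ≠ 2 := fun h => h2δ (h ▸ hδmem)
  have hj3 : 3 ≤ j' := by omega
  obtain ⟨m, rfl⟩ : ∃ m, j' = m + 1 := ⟨j' - 1, by omega⟩
  have hm2 : 2 ≤ m := by omega
  have hγ1n : partAt γ 1 = m := by omega
  have hγ2n : partAt γ 2 < m := by omega
  have hγlem : ∀ a ∈ γ, a ≤ m := fun a ha => hγ1n ▸ le_partAt_one γ a ha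
  have hmem : m ∈ γ := Multiset.one_le_count_iff_mem.mp
    (count_of_partAt γ m 0 (by omega) hγlem (by rw [hγ1n]))
  have hcnt1 : γ.count m = 1 := by
    by_contra h
    have h2 : 2 ≤ γ.count m := by
      have := Multiset.one_le_count_iff_mem.mpr hmem; omega
    have h3 : m ≤ partAt γ 2 := (le_partAt_iff γ 1 m (by omega)).mpr
      (by rw [card_filter_ge_eq_count γ m hγlem]; omega)
    omega
  simp only [Gmap, Qbar4, Set.mem_setOf_eq, Nat.add_sub_cancel]
  set C := γ.erase m with hCdef
  set D := δ.erase (m + 1) with hDdef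
  have hγdec : m ::ₘ C = γ := Multiset.cons_erase hmem
  have hδdec : (m + 1) ::ₘ D = δ := Multiset.cons_erase hδmem
  have hCparts : ∀ c ∈ C, 1 ≤ c ∧ c < m := by
    intro c hc
    have hcγ : c ∈ γ := Multiset.mem_of_le (Multiset.erase_le _ _) hc
    refine ⟨hγpos c hcγ, ?_⟩
    by_contra h
    have hle := hγlem c hcγ
    have hcm : c = m := by omega
    have h1 : 1 ≤ Multiset.count m C := Multiset.one_le_count_iff_mem.mpr (hcm ▸ hc)
    have h2 := Multiset.count_erase_self m γ
    rw [← hCdef] at h2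
    omega
  have hDparts : ∀ d ∈ D, 1 ≤ d ∧ d ≤ m + 1 ∧ d ≠ 2 := by
    intro d hd
    have hdδ : d ∈ δ := Multiset.mem_of_le (Multiset.erase_le _ _) hd
    exact ⟨hδpos d hdδ, hδle d hdδ, fun h => h2δ (h ▸ hdδ)⟩
  have hcC : Multiset.card γ = Multiset.card C + 1 := by rw [← hγdec]; simp
  have hcD : Multiset.card δ = Multiset.card D + 1 := by rw [← hδdec]; simp
  have hsC : γ.sum = m + C.sum := by rw [← hγdec]; simp
  have hsD : δ.sum = (m + 1) + D.sum := by rw [← hδdec]; simp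
  set Df := D.filter (fun a => 3 ≤ a) with hDfdef
  set Dn := D.filter (fun a => ¬ 3 ≤ a) with hDndef
  have hDfn : Df + Dn = D := Multiset.filter_add_not _ D
  have hDn1 : ∀ d ∈ Dn, d = 1 := by
    intro d hd
    obtain ⟨hd1, hd3⟩ := Multiset.mem_filter.mp hd
    have := hDparts d hd1
    omega
  have hsDn : Dn.sum = Multiset.card Dn := by
    conv_lhs => rw [Multiset.eq_replicate_card.mpr hDn1]
    rw [Multiset.sum_replicate]; simp
  have hsD' : Df.sum + Dn.sum = D.sum := by rw [← hDfn, Multiset.sum_add]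
  have hcD' : Multiset.card Df + Multiset.card Dn = Multiset.card D := by
    rw [← hDfn, Multiset.card_add]
  have hDfparts : ∀ d ∈ Df, 3 ≤ d ∧ d ≤ m + 1 := by
    intro d hd
    obtain ⟨hd1, hd3⟩ := Multiset.mem_filter.mp hd
    have := hDparts d hd1
    omega
  have e1 := sum_map_pred Df (fun a ha => by have := hDfparts a ha; omega)
  have e2 := sum_map_succ C
  have hβ'le : ∀ a ∈ (m ::ₘ m ::ₘ 2 ::ₘ C.map (fun a => a + 1)), a ≤ m := by
    intro a ha
    rcases Multiset.mem_cons.mp ha with rfl | ha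
    · omega
    rcases Multiset.mem_cons.mp ha with rfl | ha
    · omega
    rcases Multiset.mem_cons.mp ha with rfl | ha
    · omega
    obtain ⟨c, hc, rfl⟩ := Multiset.mem_map.mp ha
    have := hCparts c hc; omega
  have hα'le : ∀ a ∈ (m ::ₘ m ::ₘ Df.map (fun a => a - 1)), a ≤ m := by
    intro a ha
    rcases Multiset.mem_cons.mp ha with rfl | ha
    · omega
    rcases Multiset.mem_cons.mp ha with rfl | ha
    · omega
    obtain ⟨d, hd, rfl⟩ := Multiset.mem_map.mp ha
    have := hDfparts d hd; omega
  have hβ'cnt : 2 ≤ (m ::ₘ m ::ₘ 2 ::ₘ C.map (fun a => a + 1)).count m := by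
    rw [Multiset.count_cons_self]
    rw [show (m ::ₘ 2 ::ₘ C.map (fun a => a + 1)).count m
        = (2 ::ₘ C.map (fun a => a + 1)).count m + 1 from Multiset.count_cons_self m _]
    omega
  have hα'cnt : 2 ≤ (m ::ₘ m ::ₘ Df.map (fun a => a - 1)).count m := by
    rw [Multiset.count_cons_self]
    rw [show (m ::ₘ Df.map (fun a => a - 1)).count m
        = (Df.map (fun a => a - 1)).count m + 1 from Multiset.count_cons_self m _]
    omega
  refine ⟨by omega, ?_, ?_, ?_, ?_, ?_, ?_, ?_, ?_, ?_, ?_, ?_, ?_⟩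
  · intro a ha
    rcases Multiset.mem_cons.mp ha with rfl | ha
    · omega
    rcases Multiset.mem_cons.mp ha with rfl | ha
    · omega
    obtain ⟨d, hd, rfl⟩ := Multiset.mem_map.mp ha
    have := hDfparts d hd; omega
  · intro a ha
    rcases Multiset.mem_cons.mp ha with rfl | ha
    · omega
    rcases Multiset.mem_cons.mp ha with rfl | ha
    · omega
    rcases Multiset.mem_cons.mp ha with rfl | ha
    · omega
    obtain ⟨c, hc, rfl⟩ := Multiset.mem_map.mp ha
    have := hCparts c hc; omega
  · exact hα'le
  · exact hβ'le
  · simp only [Multiset.sum_cons]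
    have hsq : (m + 1) * (m + 1) = m * m + 2 * m + 1 := by ring
    omega
  · apply partAt_eq_of_count _ m 0 (by omega) hβ'le
    omega
  · apply partAt_eq_of_count _ m 1 (by omega) hβ'le
    omega
  · simp only [Multiset.card_cons, Multiset.card_map]
    have : Multiset.card Df ≤ Multiset.card D := by omega
    omega
  · apply partAt_eq_of_count _ m 0 (by omega) hα'le
    omega
  · apply partAt_eq_of_count _ m 1 (by omega) hα'le
    omega
  · have : ∀ a ∈ (m ::ₘ m ::ₘ Df.map (fun a => a - 1)), 2 ≤ a := by
      intro a ha
      rcases Multiset.mem_cons.mp ha with rfl | ha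
      · omega
      rcases Multiset.mem_cons.mp ha with rfl | ha
      · omega
      obtain ⟨d, hd, rfl⟩ := Multiset.mem_map.mp ha
      have := hDfparts d hd; omega
    exact_mod_cast (sMin_ge_iff _ 2).mpr this
  · have hmem2 : (2:ℕ) ∈ (m ::ₘ m ::ₘ 2 ::ₘ C.map (fun a => a + 1)) := by
      simp
    have hge2 : ∀ a ∈ (m ::ₘ m ::ₘ 2 ::ₘ C.map (fun a => a + 1)), 2 ≤ a := by
      intro a ha
      rcases Multiset.mem_cons.mp ha with rfl | ha
      · omega
      rcases Multiset.mem_cons.mp ha with rfl | ha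
      · omega
      rcases Multiset.mem_cons.mp ha with rfl | ha
      · omega
      obtain ⟨c, hc, rfl⟩ := Multiset.mem_map.mp ha
      have := hCparts c hc; omega
    exact_mod_cast (sMin_eq_iff _ 2).mpr ⟨hmem2, hge2⟩
lemma map_sub_add (M : Multiset ℕ) (h : ∀ a ∈ M, 1 ≤ a) :
    (M.map (fun a => a - 1)).map (fun a => a + 1) = M := by
  rw [Multiset.map_map]
  conv_rhs => rw [← Multiset.map_id M]
  exact Multiset.map_congr rfl (fun x hx => by have := h x hx; simp; omega)

lemma map_add_sub (M : Multiset ℕ) :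
    (M.map (fun a => a + 1)).map (fun a => a - 1) = M := by
  rw [Multiset.map_map]
  conv_rhs => rw [← Multiset.map_id M]
  exact Multiset.map_congr rfl (fun x hx => by simp)

lemma cons_cons_eq_rep2 (j : ℕ) (M : Multiset ℕ) :
    Multiset.replicate 2 j + M = j ::ₘ j ::ₘ M := by
  simp [Multiset.replicate_succ, Multiset.cons_add]

lemma cons_cons_two (j : ℕ) (M : Multiset ℕ) :
    (j ::ₘ j ::ₘ ({2} : Multiset ℕ)) + M = j ::ₘ j ::ₘ 2 ::ₘ M := by
  simp [Multiset.cons_add, Multiset.singleton_add]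

lemma FG (n j : ℕ) (α β : Multiset ℕ) (hx : (j, α, β) ∈ Qbar4 n) :
    Gmap (Fmap (j, α, β)) = (j, α, β) := by
  obtain ⟨hj, hαpos, hβpos, hαle, hβle, hsum, hβ1, hβ2, hcard, hα1, hα2, hαmin, hβmin⟩ := hx
  simp only at hj hαpos hβpos hαle hβle hsum hβ1 hβ2 hcard hα1 hα2 hαmin hβmin
  have hβmin' := (sMin_eq_iff β 2).mp (by exact_mod_cast hβmin)
  have h2β : 2 ∈ β := hβmin'.1
  have hβ2parts : ∀ a ∈ β, 2 ≤ a := hβmin'.2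
  have hα2parts : ∀ a ∈ α, 2 ≤ a := (sMin_ge_iff α 2).mp (by exact_mod_cast hαmin)
  have hj2 : 2 ≤ j := le_trans (hβ2parts 2 h2β) (hβle 2 h2β)
  have hcntα : 2 ≤ α.count j := count_of_partAt α j 1 hj hαle (by rw [hα2])
  have hcntβ : 2 ≤ β.count j := count_of_partAt β j 1 hj hβle (by rw [hβ2])
  have hcardα : 2 ≤ Multiset.card α := le_trans hcntα (Multiset.count_le_card j α)
  have hcardβ : 3 ≤ Multiset.card β := by omega
  have hBle : (j ::ₘ j ::ₘ {2}) ≤ β :=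
    jj2_le j β hj2 hcntβ h2β hcardβ (fun a ha => ⟨hβ2parts a ha, hβle a ha⟩)
  have hAle : Multiset.replicate 2 j ≤ α := Multiset.le_count_iff_replicate_le.mp hcntα
  simp only [Fmap, Gmap, Nat.add_sub_cancel, Multiset.erase_cons_head]
  set A := α - Multiset.replicate 2 j with hA
  set B := β - (j ::ₘ j ::ₘ {2}) with hB
  have hαdec : Multiset.replicate 2 j + A = α := by
    rw [hA, add_comm]; exact tsub_add_cancel_of_le hAle
  have hβdec : (j ::ₘ j ::ₘ {2}) + B = β := by
    rw [hB, add_comm]; exact tsub_add_cancel_of_le hBle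
  have hAparts : ∀ a ∈ A, 2 ≤ a ∧ a ≤ j := by
    intro a ha
    have : a ∈ α := Multiset.mem_of_le (Multiset.sub_le_self _ _) ha
    exact ⟨hα2parts a this, hαle a this⟩
  have hBparts : ∀ a ∈ B, 2 ≤ a ∧ a ≤ j := by
    intro a ha
    have : a ∈ β := Multiset.mem_of_le (Multiset.sub_le_self _ _) ha
    exact ⟨hβ2parts a this, hβle a this⟩
  simp only [Prod.mk.injEq]
  refine ⟨trivial, ?_, ?_⟩
  · -- α component
    rw [Multiset.filter_add]
    have h1 : Multiset.filter (fun a => 3 ≤ a) (A.map (fun a => a + 1))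
        = A.map (fun a => a + 1) := by
      rw [Multiset.filter_eq_self]
      intro a ha
      obtain ⟨b, hb, rfl⟩ := Multiset.mem_map.mp ha
      have := hAparts b hb; omega
    have h2 : Multiset.filter (fun a => 3 ≤ a)
        (Multiset.replicate (Multiset.card B - Multiset.card A) 1) = 0 := by
      rw [Multiset.filter_eq_nil]
      intro a ha
      have := Multiset.eq_of_mem_replicate ha; omega
    rw [h1, h2, add_zero, map_add_sub]
    rw [← hαdec, cons_cons_eq_rep2]
  · -- β component
    rw [map_sub_add B (fun a ha => by have := hBparts a ha; omega)]
    rw [← hβdec, cons_cons_two]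

lemma GF (n j' : ℕ) (γ δ : Multiset ℕ) (hx : (j', γ, δ) ∈ P7 n) :
    Fmap (Gmap (j', γ, δ)) = (j', γ, δ) := by
  obtain ⟨hj', hγpos, hδpos, hγle, hδle, hsum, hcard, hγ1, hγ2, hδ1, h2δ⟩ := hx
  simp only at hj' hγpos hδpos hγle hδle hsum hcard hγ1 hγ2 hδ1 h2δ
  have hδmem : j' ∈ δ := by
    have h := count_of_partAt δ j' 0 hj' hδle (by rw [hδ1])
    exact Multiset.one_le_count_iff_mem.mp (by omega)
  have hj'2 : j' ≠ 2 := fun h => h2δ (h ▸ hδmem)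
  have hj3 : 3 ≤ j' := by omega
  obtain ⟨m, rfl⟩ : ∃ m, j' = m + 1 := ⟨j' - 1, by omega⟩
  have hm2 : 2 ≤ m := by omega
  have hγ1n : partAt γ 1 = m := by omega
  have hγ2n : partAt γ 2 < m := by omega
  have hγlem : ∀ a ∈ γ, a ≤ m := fun a ha => hγ1n ▸ le_partAt_one γ a ha
  have hmem : m ∈ γ := Multiset.one_le_count_iff_mem.mp
    (count_of_partAt γ m 0 (by omega) hγlem (by rw [hγ1n]))
  simp only [Fmap, Gmap, Nat.add_sub_cancel, Multiset.erase_cons_head]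
  set C := γ.erase m with hCdef
  set D := δ.erase (m + 1) with hDdef
  have hγdec : m ::ₘ C = γ := Multiset.cons_erase hmem
  have hδdec : (m + 1) ::ₘ D = δ := Multiset.cons_erase hδmem
  have hcC : Multiset.card γ = Multiset.card C + 1 := by rw [← hγdec]; simp
  have hcD : Multiset.card δ = Multiset.card D + 1 := by rw [← hδdec]; simp
  have hDparts : ∀ d ∈ D, 1 ≤ d ∧ d ≤ m + 1 ∧ d ≠ 2 := by
    intro d hd
    have hdδ : d ∈ δ := Multiset.mem_of_le (Multiset.erase_le _ _) hd
    exact ⟨hδpos d hdδ, hδle d hdδ, fun h => h2δ (h ▸ hdδ)⟩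
  set Df := D.filter (fun a => 3 ≤ a) with hDfdef
  set Dn := D.filter (fun a => ¬ 3 ≤ a) with hDndef
  have hDfn : Df + Dn = D := Multiset.filter_add_not _ D
  have hDn1 : ∀ d ∈ Dn, d = 1 := by
    intro d hd
    obtain ⟨hd1, hd3⟩ := Multiset.mem_filter.mp hd
    have := hDparts d hd1
    omega
  have hcD' : Multiset.card Df + Multiset.card Dn = Multiset.card D := by
    rw [← hDfn, Multiset.card_add]
  have hβ'sub : (m ::ₘ m ::ₘ 2 ::ₘ C.map (fun a => a + 1)) - (m ::ₘ m ::ₘ {2})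
      = C.map (fun a => a + 1) := by
    rw [← cons_cons_two, add_comm, add_tsub_cancel_right]
  have hα'sub : (m ::ₘ m ::ₘ Df.map (fun a => a - 1)) - Multiset.replicate 2 m
      = Df.map (fun a => a - 1) := by
    rw [← cons_cons_eq_rep2, add_tsub_cancel_left]
  simp only [Prod.mk.injEq]
  refine ⟨trivial, ?_, ?_⟩
  · -- γ component
    rw [hβ'sub, map_add_sub, hγdec]
  · -- δ component
    rw [hβ'sub, hα'sub]
    rw [map_sub_add Df (fun a ha => by
      have := Multiset.mem_filter.mp ha; omega)]
    have hrep : Multiset.replicate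
        (Multiset.card (C.map (fun a => a + 1)) - Multiset.card (Df.map (fun a => a - 1))) 1
        = Dn := by
      have hcCD : Multiset.card C = Multiset.card D := by omega
      rw [Multiset.card_map, Multiset.card_map,
        show Multiset.card C - Multiset.card Df = Multiset.card Dn by omega]
      exact (Multiset.eq_replicate_card.mpr hDn1).symm
    rw [hrep, hDfn, hδdec]

/-- For every integer n ≥ 0, #Q̄₄(0,n) = #P₇(0,n). -/
theorem Qbar4_card_eq_P7_card (n : ℕ) : Nat.card (Qbar4 n) = Nat.card (P7 n) := by
  refine Nat.card_congr ⟨fun x => ⟨Fmap x.1, ?_⟩, fun y => ⟨Gmap y.1, ?_⟩, ?_, ?_⟩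
  · obtain ⟨⟨j, α, β⟩, hx⟩ := x
    exact Fmem n j α β hx
  · obtain ⟨⟨j', γ, δ⟩, hy⟩ := y
    exact Gmem n j' γ δ hy
  · intro x
    obtain ⟨⟨j, α, β⟩, hx⟩ := x
    exact Subtype.ext (FG n j α β hx)
  · intro y
    obtain ⟨⟨j', γ, δ⟩, hy⟩ := y
    exact Subtype.ext (GF n j' γ δ hy)
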